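/- arXiv:2410.19400 — 3 statements merged into one kernel-verified Lean document; each statement's English description precedes it below -/
import Mathlib

section
/- In the deterministic tabular setting, the value-aware policy π* globally maximizes the regularizer R̄₁: for every policy π, R̄₁(π) ≤ R̄₁(π*), the inequality holding in the extended reals; moreover R̄₁(π*) is a real number (in particular R̄₁(π*) > −∞). -/
open scoped BigOperators Classical


lemma ecoe_sum {ι : Type*} (s : Finset ι) (g : ι → ℝ) :
    ((∑ i ∈ s, g i : ℝ) : EReal) = ∑ i ∈ s, ((g i : ℝ) : EReal) :=
  map_sum (⟨⟨Real.toEReal, EReal.coe_zero⟩, EReal.coe_add⟩ : ℝ →+ EReal) g s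

lemma gibbs {ι : Type*} (T : Finset ι) (q p : ι → ℝ)
    (hq : ∀ i ∈ T, 0 < q i) (hp : ∀ i ∈ T, 0 < p i)
    (hpq : ∑ i ∈ T, p i ≤ ∑ i ∈ T, q i) :
    ∑ i ∈ T, q i * Real.log (p i) ≤ ∑ i ∈ T, q i * Real.log (q i) := by
  have key : ∀ i ∈ T, q i * Real.log (p i) - q i * Real.log (q i) ≤ p i - q i := by
    intro i hi
    have hqi := hq i hi; have hpi := hp i hi
    have h2 : Real.log (p i / q i) ≤ p i / q i - 1 :=
      Real.log_le_sub_one_of_pos (div_pos hpi hqi)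
    calc q i * Real.log (p i) - q i * Real.log (q i)
        = q i * Real.log (p i / q i) := by rw [Real.log_div hpi.ne' hqi.ne']; ring
      _ ≤ q i * (p i / q i - 1) := mul_le_mul_of_nonneg_left h2 hqi.le
      _ = p i - q i := by field_simp
  have h := Finset.sum_le_sum key
  rw [Finset.sum_sub_distrib, Finset.sum_sub_distrib] at h
  linarith

lemma gibbs_if {ι : Type*} [Fintype ι] (c q p : ι → ℝ) (K : ℝ) (hK : 0 ≤ K)
    (hc : ∀ i, c i = K * q i)
    (hq0 : ∀ i, 0 ≤ q i) (hqsum : ∑ i, q i = 1)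
    (hp0 : ∀ i, 0 ≤ p i) (hpsum : ∑ i, p i ≤ 1)
    (hpq : ∀ i, q i ≠ 0 → 0 < p i) :
    ∑ i, (if q i = 0 then 0 else c i * Real.log (p i)) ≤
    ∑ i, (if q i = 0 then 0 else c i * Real.log (q i)) := by
  classical
  set T : Finset ι := Finset.univ.filter (fun i => q i ≠ 0) with hT
  have conv : ∀ r : ι → ℝ, ∑ i, (if q i = 0 then 0 else c i * Real.log (r i))
      = K * ∑ i ∈ T, q i * Real.log (r i) := by
    intro r
    rw [Finset.mul_sum, Finset.sum_filter]
    apply Finset.sum_congr rfl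
    intro i _
    by_cases h : q i = 0 <;> simp [h, hc i] <;> ring
  rw [conv, conv]
  have hqT : ∀ i ∈ T, 0 < q i := fun i hi =>
    lt_of_le_of_ne (hq0 i) (Ne.symm (Finset.mem_filter.1 hi).2)
  have hpT : ∀ i ∈ T, 0 < p i := fun i hi => hpq i (Finset.mem_filter.1 hi).2
  have hsum : ∑ i ∈ T, p i ≤ ∑ i ∈ T, q i := by
    have h1 : ∑ i ∈ T, q i = 1 := by
      rw [← hqsum]; exact Finset.sum_filter_ne_zero Finset.univ
    have h2 : ∑ i ∈ T, p i ≤ ∑ i, p i :=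
      Finset.sum_le_sum_of_subset_of_nonneg (Finset.subset_univ T)
        (fun i _ _ => hp0 i)
    rw [h1]; exact h2.trans hpsum
  exact mul_le_mul_of_nonneg_left (gibbs T q p hqT hpT hsum) hK

/-- Extended-real logarithm of a (nonnegative) real number, with `elog 0 = ⊥` (i.e. `log 0 = -∞`).
Note that in `EReal` we have `0 * ⊥ = 0`, matching the convention `0·(−∞) = 0`. -/
noncomputable def elog (x : ℝ) : EReal := if x = 0 then ⊥ else ((Real.log x : ℝ) : EReal)

/-- The regularizer
`R̄₁(π) = Σ_s d(s)·Σ_{s'} N(s'|s)·exp(α(V(s')−V(s)))·log(Σ_a π(a|s)·𝟙[f(s,a)=s'])`,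
valued in the extended reals. -/
noncomputable def Rbar1Det {S A : Type*} [Fintype S] [Fintype A]
    (d : S → ℝ) (N : S → S → ℝ) (V : S → ℝ) (α : ℝ)
    (f : S → A → S) (π : S → A → ℝ) : EReal :=
  ∑ s, (d s : EReal) *
    ∑ s', ((N s s' * Real.exp (α * (V s' - V s)) : ℝ) : EReal) *
      elog (∑ a, π s a * (if f s a = s' then (1 : ℝ) else 0))

/-- in the deterministic tabular setting, the value-aware policy `π*` globally
maximizes `R̄₁`, and `R̄₁(π*)` is a real number (in particular `R̄₁(π*) > −∞`). -/
theorem stmt8 {S A : Type*} [Fintype S] [Fintype A] [Nonempty S] [Nonempty A]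
    (f : S → A → S)
    (d : S → ℝ) (hd0 : ∀ s, 0 ≤ d s) (hd1 : ∑ s, d s = 1)
    (β : S → A → ℝ) (hβ0 : ∀ s a, 0 ≤ β s a) (hβ1 : ∀ s, ∑ a, β s a = 1)
    (N : S → S → ℝ)
    (hN : ∀ s s', N s s' = ∑ a, β s a * (if f s a = s' then (1 : ℝ) else 0))
    (V : S → ℝ) (α : ℝ)
    (Z : S → ℝ) (hZ : ∀ s, Z s = ∑ s', Real.exp (α * V s') * N s s')
    (πst : S → A → ℝ)
    (hπst : ∀ s a, πst s a = Real.exp (α * V (f s a)) * β s a / Z s) :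
    (∀ π : S → A → ℝ, (∀ s a, 0 ≤ π s a) → (∀ s, ∑ a, π s a = 1) →
      Rbar1Det d N V α f π ≤ Rbar1Det d N V α f πst) ∧
    (∃ r : ℝ, Rbar1Det d N V α f πst = (r : EReal)) := by
  classical
  -- abbreviations
  set c : S → S → ℝ := fun s s' => N s s' * Real.exp (α * (V s' - V s)) with hcdef
  set P : (S → A → ℝ) → S → S → ℝ :=
    fun π s s' => ∑ a, π s a * (if f s a = s' then (1 : ℝ) else 0) with hPdef
  -- basic facts
  have hN0 : ∀ s s', 0 ≤ N s s' := by
    intro s s'; rw [hN]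
    exact Finset.sum_nonneg fun a _ => mul_nonneg (hβ0 s a) (by split <;> norm_num)
  have hP0 : ∀ (π : S → A → ℝ), (∀ s a, 0 ≤ π s a) → ∀ s s', 0 ≤ P π s s' := by
    intro π h0 s s'
    exact Finset.sum_nonneg fun a _ => mul_nonneg (h0 s a) (by split <;> norm_num)
  have hPsum : ∀ (π : S → A → ℝ) s, ∑ s', P π s s' = ∑ a, π s a := by
    intro π s
    rw [hPdef, Finset.sum_comm]
    apply Finset.sum_congr rfl
    intro a _
    rw [← Finset.mul_sum]
    simp [Finset.sum_ite_eq]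
  have hNsum : ∀ s, ∑ s', N s s' = 1 := by
    intro s
    have : ∑ s', N s s' = ∑ s', P β s s' := by
      apply Finset.sum_congr rfl; intro s' _; rw [hN]
    rw [this, hPsum, hβ1]
  have hZpos : ∀ s, 0 < Z s := by
    intro s
    have hw : ∃ s', N s s' ≠ 0 := by
      by_contra h; push_neg at h
      have := hNsum s; simp [h] at this
    obtain ⟨s'₀, hs'₀⟩ := hw
    rw [hZ]
    refine Finset.sum_pos' (fun i _ => mul_nonneg (Real.exp_pos _).le (hN0 s i))
      ⟨s'₀, Finset.mem_univ _, mul_pos (Real.exp_pos _)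
        (lt_of_le_of_ne (hN0 s s'₀) (Ne.symm hs'₀))⟩
  set q : S → S → ℝ := fun s s' => Real.exp (α * V s') * N s s' / Z s with hqdef
  have hq0 : ∀ s s', 0 ≤ q s s' :=
    fun s s' => div_nonneg (mul_nonneg (Real.exp_pos _).le (hN0 s s')) (hZpos s).le
  have hqzero : ∀ s s', q s s' = 0 ↔ N s s' = 0 := by
    intro s s'
    rw [hqdef]
    simp only [div_eq_zero_iff, mul_eq_zero]
    constructor
    · rintro ((h | h) | h)
      · exact absurd h (Real.exp_pos _).ne'
      · exact h
      · exact absurd h (hZpos s).ne'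
    · intro h; exact Or.inl (Or.inr h)
  have hqsum : ∀ s, ∑ s', q s s' = 1 := by
    intro s
    rw [hqdef]
    simp only
    rw [← Finset.sum_div, ← hZ, div_self (hZpos s).ne']
  have hPst : ∀ s s', P πst s s' = q s s' := by
    intro s s'
    have step : ∀ a ∈ Finset.univ, πst s a * (if f s a = s' then (1:ℝ) else 0)
        = Real.exp (α * V s') / Z s * (β s a * (if f s a = s' then (1:ℝ) else 0)) := by
      intro a _
      rw [hπst]
      by_cases h : f s a = s'
      · rw [if_pos h, h]; ring
      · rw [if_neg h]; ring
    rw [hPdef]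
    simp only
    rw [Finset.sum_congr rfl step, ← Finset.mul_sum, ← hN, hqdef]
    ring
  -- proportionality of the weights
  have hcq : ∀ s s', c s s' = (Real.exp (-(α * V s)) * Z s) * q s s' := by
    intro s s'
    rw [hcdef, hqdef]
    simp only
    rw [show α * (V s' - V s) = -(α * V s) + α * V s' by ring, Real.exp_add]
    field_simp [(hZpos s).ne']
  have hKpos : ∀ s, 0 < Real.exp (-(α * V s)) * Z s :=
    fun s => mul_pos (Real.exp_pos _) (hZpos s)
  -- the real-valued inner sums
  set g : (S → A → ℝ) → S → S → ℝ :=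
    fun π s s' => if q s s' = 0 then 0 else c s s' * Real.log (P π s s') with hgdef
  -- inner EReal sum equals coercion of real sum, when P positive on support
  have inner_eq : ∀ (π : S → A → ℝ) s, (∀ s', q s s' ≠ 0 → P π s s' ≠ 0) →
      (∑ s', ((c s s' : ℝ) : EReal) * elog (P π s s')) = ((∑ s', g π s s' : ℝ) : EReal) := by
    intro π s hpos
    rw [ecoe_sum]
    apply Finset.sum_congr rfl
    intro s' _
    by_cases h : q s s' = 0
    · have hc0 : c s s' = 0 := by
        rw [hcdef]; simp only; rw [(hqzero s s').1 h, zero_mul]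
      rw [hgdef]
      simp only [h, if_pos, hc0, EReal.coe_zero, zero_mul]
    · rw [hgdef]
      simp only [h, if_neg, if_false]
      rw [elog, if_neg (hpos s' h), EReal.coe_mul]
      norm_cast
  -- value for πst
  set rst : S → ℝ := fun s => ∑ s', g πst s s' with hrstdef
  have innerst : ∀ s, (∑ s', ((c s s' : ℝ) : EReal) * elog (P πst s s')) = ((rst s : ℝ) : EReal) := by
    intro s
    apply inner_eq
    intro s' hq'
    rw [hPst]
    exact hq'
  constructor
  · intro π hπ0 hπ1
    rw [Rbar1Det, Rbar1Det]
    apply Finset.sum_le_sum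
    intro s _
    have hd : (0 : EReal) ≤ (d s : EReal) := by
      exact_mod_cast hd0 s
    apply mul_le_mul_of_nonneg_left _ hd
    -- inner inequality
    show (∑ s', ((c s s' : ℝ) : EReal) * elog (P π s s'))
        ≤ ∑ s', ((c s s' : ℝ) : EReal) * elog (P πst s s')
    by_cases hcase : ∀ s', q s s' ≠ 0 → P π s s' ≠ 0
    · rw [inner_eq π s hcase, innerst s, EReal.coe_le_coe_iff]
      have hrst : rst s = ∑ s', (if q s s' = 0 then 0 else c s s' * Real.log (q s s')) := by
        rw [hrstdef]
        simp only [hgdef]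
        exact Finset.sum_congr rfl fun s' _ => by rw [hPst]
      rw [hrst]
      simp only [hgdef]
      apply gibbs_if (c s) (q s) (P π s) (Real.exp (-(α * V s)) * Z s) (hKpos s).le
        (hcq s) (hq0 s) (hqsum s) (hP0 π hπ0 s)
      · rw [hPsum, hπ1]
      · intro s' hq'
        exact lt_of_le_of_ne (hP0 π hπ0 s s') (Ne.symm (hcase s' hq'))
    · push_neg at hcase
      obtain ⟨s'₀, hq'₀, hP'₀⟩ := hcase
      have hcpos : (0:ℝ) < c s s'₀ := by
        rw [hcdef]
        exact mul_pos (lt_of_le_of_ne (hN0 s s'₀)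
          (Ne.symm (fun h => hq'₀ ((hqzero s s'₀).2 h)))) (Real.exp_pos _)
      have hbot : ((c s s'₀ : ℝ) : EReal) * elog (P π s s'₀) = ⊥ := by
        rw [elog, if_pos hP'₀]
        exact EReal.coe_mul_bot_of_pos hcpos
      have : (∑ s', ((c s s' : ℝ) : EReal) * elog (P π s s')) = ⊥ := by
        rw [← Finset.add_sum_erase _ _ (Finset.mem_univ s'₀), hbot, EReal.bot_add]
      rw [this]
      exact bot_le
  · refine ⟨∑ s, d s * rst s, ?_⟩
    rw [Rbar1Det, ecoe_sum]
    apply Finset.sum_congr rfl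
    intro s _
    rw [show (∑ s', ((N s s' * Real.exp (α * (V s' - V s)) : ℝ) : EReal) *
        elog (∑ a, πst s a * (if f s a = s' then (1:ℝ) else 0)))
      = ((rst s : ℝ) : EReal) from innerst s, ← EReal.coe_mul]
end

section
/- In the stochastic tabular setting, for every policy π, R̄₁(π_in) ≥ R̄₁(π), the inequality holding in the extended reals, where π_in is the projection of π onto the support of the behavior policy β. -/
open scoped BigOperators Classical

/-- The regularizer
`R̄₁(π) = Σ_s d(s)·Σ_{s'} N(s'|s)·exp(α(V(s')−V(s)))·log(Σ_a M(s'|s,a)·π(a|s))`,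
valued in the extended reals. -/
noncomputable def Rbar1Sto {S A : Type*} [Fintype S] [Fintype A]
    (d : S → ℝ) (N : S → S → ℝ) (V : S → ℝ) (α : ℝ)
    (M : S → A → S → ℝ) (π : S → A → ℝ) : EReal :=
  ∑ s, (d s : EReal) *
    ∑ s', ((N s s' * Real.exp (α * (V s' - V s)) : ℝ) : EReal) *
      elog (∑ a, M s a s' * π s a)

lemma elog_mono {x y : ℝ} (hx : 0 ≤ x) (hxy : x ≤ y) : elog x ≤ elog y := by
  unfold elog
  rcases eq_or_lt_of_le hx with h | h
  · simp [← h]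
  · have hy : 0 < y := lt_of_lt_of_le h hxy
    rw [if_neg (ne_of_gt h), if_neg (ne_of_gt hy)]
    exact_mod_cast Real.log_le_log h hxy

/-- in the stochastic tabular setting, projecting a policy onto the support of the
behavior policy does not decrease the regularizer: `R̄₁(π_in) ≥ R̄₁(π)`. -/
theorem stmt12 {S A : Type*} [Fintype S] [Fintype A] [Nonempty S] [Nonempty A]
    (d : S → ℝ) (hd0 : ∀ s, 0 ≤ d s) (hd1 : ∑ s, d s = 1)
    (β : S → A → ℝ) (hβ0 : ∀ s a, 0 ≤ β s a) (hβ1 : ∀ s, ∑ a, β s a = 1)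
    (M : S → A → S → ℝ) (hM0 : ∀ s a s', 0 ≤ M s a s')
    (hMzero : ∀ s a, β s a = 0 → ∀ s', M s a s' = 0)
    (hMpmf : ∀ s a, 0 < β s a → ∑ s', M s a s' = 1)
    (N : S → S → ℝ) (hN : ∀ s s', N s s' = ∑ a, β s a * M s a s')
    (V : S → ℝ) (α : ℝ)
    (π : S → A → ℝ) (hπ0 : ∀ s a, 0 ≤ π s a) (hπ1 : ∀ s, ∑ a, π s a = 1)
    (ε : S → ℝ) (hε : ∀ s, ε s = ∑ a ∈ Finset.univ.filter (fun a => β s a = 0), π s a)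
    (n : S → ℕ) (hn : ∀ s, n s = (Finset.univ.filter (fun a => 0 < β s a)).card)
    (πin : S → A → ℝ)
    (hπin : ∀ s a, πin s a = if 0 < β s a then π s a + ε s / n s else 0) :
    Rbar1Sto d N V α M π ≤ Rbar1Sto d N V α M πin := by
  unfold Rbar1Sto
  apply Finset.sum_le_sum
  intro s _
  apply mul_le_mul_of_nonneg_left _ (by exact_mod_cast hd0 s)
  apply Finset.sum_le_sum
  intro s' _
  have hc : (0 : EReal) ≤ ((N s s' * Real.exp (α * (V s' - V s)) : ℝ) : EReal) := by
    have : 0 ≤ N s s' := by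
      rw [hN]
      exact Finset.sum_nonneg fun a _ => mul_nonneg (hβ0 s a) (hM0 s a s')
    exact_mod_cast mul_nonneg this (Real.exp_pos _).le
  apply mul_le_mul_of_nonneg_left _ hc
  apply elog_mono
  · exact Finset.sum_nonneg fun a _ => mul_nonneg (hM0 s a s') (hπ0 s a)
  · apply Finset.sum_le_sum
    intro a _
    rcases eq_or_lt_of_le (hβ0 s a) with hb | hb
    · simp [hMzero s a hb.symm s']
    · apply mul_le_mul_of_nonneg_left _ (hM0 s a s')
      rw [hπin, if_pos hb]
      have hε0 : 0 ≤ ε s := by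
        rw [hε]
        exact Finset.sum_nonneg fun a _ => hπ0 s a
      have : 0 ≤ ε s / n s := div_nonneg hε0 (Nat.cast_nonneg _)
      linarith
end

section
/- In the stochastic tabular setting, let π be a policy with R̄₁(π) > −∞. If there exists a state s₁ with d(s₁) > 0 and an action ã with π(ã|s₁) > 0 and β(ã|s₁) = 0 (i.e., π is not constrained within the support of the behavior policy at some state in the support of d), then R̄₁(π_in) > R̄₁(π). -/
open scoped BigOperators Classical

private lemma ereal_coe_sum {ι : Type*} (s : Finset ι) (f : ι → ℝ) :
    ((∑ i ∈ s, f i : ℝ) : EReal) = ∑ i ∈ s, ((f i : ℝ) : EReal) :=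
  map_sum (⟨⟨Real.toEReal, EReal.coe_zero⟩, EReal.coe_add⟩ : ℝ →+ EReal) f s

private lemma ereal_sum_eq_bot {ι : Type*} (s : Finset ι) (f : ι → EReal)
    {a : ι} (ha : a ∈ s) (h : f a = ⊥) : ∑ i ∈ s, f i = ⊥ := by
  classical
  rw [← Finset.add_sum_erase s f ha, h, EReal.bot_add]

private lemma Rbar1Sto_eq_coe {S A : Type*} [Fintype S] [Fintype A]
    (d : S → ℝ) (N : S → S → ℝ) (V : S → ℝ) (α : ℝ)
    (M : S → A → S → ℝ) (ρ : S → A → ℝ)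
    (H : ∀ s s', d s ≠ 0 → N s s' * Real.exp (α * (V s' - V s)) ≠ 0 →
      (∑ a, M s a s' * ρ s a) ≠ 0) :
    Rbar1Sto d N V α M ρ =
      ((∑ s, d s * ∑ s', (N s s' * Real.exp (α * (V s' - V s))) *
        Real.log (∑ a, M s a s' * ρ s a) : ℝ) : EReal) := by
  rw [ereal_coe_sum]
  unfold Rbar1Sto
  refine Finset.sum_congr rfl fun s _ => ?_
  by_cases hds : d s = 0
  · simp [hds]
  · rw [EReal.coe_mul, ereal_coe_sum]
    congr 1
    refine Finset.sum_congr rfl fun s' _ => ?_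
    by_cases hc : N s s' * Real.exp (α * (V s' - V s)) = 0
    · rw [hc]
      unfold elog
      by_cases hx : (∑ a, M s a s' * ρ s a) = 0 <;> simp [hx]
    · have hx := H s s' hds hc
      rw [elog, if_neg hx, ← EReal.coe_mul]

/-- in the stochastic tabular setting, if `R̄₁(π) > −∞` and `π` takes an action
outside the support of `β` with positive probability at some state in the support of `d`, then
the projected policy `π_in` strictly improves the regularizer: `R̄₁(π_in) > R̄₁(π)`. -/
theorem stmt14 {S A : Type*} [Fintype S] [Fintype A] [Nonempty S] [Nonempty A]
    (d : S → ℝ) (hd0 : ∀ s, 0 ≤ d s) (hd1 : ∑ s, d s = 1)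
    (β : S → A → ℝ) (hβ0 : ∀ s a, 0 ≤ β s a) (hβ1 : ∀ s, ∑ a, β s a = 1)
    (M : S → A → S → ℝ) (hM0 : ∀ s a s', 0 ≤ M s a s')
    (hMzero : ∀ s a, β s a = 0 → ∀ s', M s a s' = 0)
    (hMpmf : ∀ s a, 0 < β s a → ∑ s', M s a s' = 1)
    (N : S → S → ℝ) (hN : ∀ s s', N s s' = ∑ a, β s a * M s a s')
    (V : S → ℝ) (α : ℝ)
    (π : S → A → ℝ) (hπ0 : ∀ s a, 0 ≤ π s a) (hπ1 : ∀ s, ∑ a, π s a = 1)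
    (ε : S → ℝ) (hε : ∀ s, ε s = ∑ a ∈ Finset.univ.filter (fun a => β s a = 0), π s a)
    (n : S → ℕ) (hn : ∀ s, n s = (Finset.univ.filter (fun a => 0 < β s a)).card)
    (πin : S → A → ℝ)
    (hπin : ∀ s a, πin s a = if 0 < β s a then π s a + ε s / n s else 0)
    (hfin : (⊥ : EReal) < Rbar1Sto d N V α M π)
    (s₁ : S) (hs₁ : 0 < d s₁)
    (atil : A) (hπatil : 0 < π s₁ atil) (hβatil : β s₁ atil = 0) :
    Rbar1Sto d N V α M π < Rbar1Sto d N V α M πin := by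
  classical
  have hN0 : ∀ s s', 0 ≤ N s s' := fun s s' => by
    rw [hN]; exact Finset.sum_nonneg fun a _ => mul_nonneg (hβ0 s a) (hM0 s a s')
  have hc0 : ∀ s s', 0 ≤ N s s' * Real.exp (α * (V s' - V s)) :=
    fun s s' => mul_nonneg (hN0 s s') (Real.exp_pos _).le
  have hx0 : ∀ s s', 0 ≤ ∑ a, M s a s' * π s a := fun s s' =>
    Finset.sum_nonneg fun a _ => mul_nonneg (hM0 s a s') (hπ0 s a)
  -- positivity of inner sums for π on the relevant support, from `hfin`
  have Hπ : ∀ s s', d s ≠ 0 → N s s' * Real.exp (α * (V s' - V s)) ≠ 0 →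
      (∑ a, M s a s' * π s a) ≠ 0 := by
    intro s s' hds hcs hx
    refine absurd hfin ?_
    have h1 : ((N s s' * Real.exp (α * (V s' - V s)) : ℝ) : EReal) *
        elog (∑ a, M s a s' * π s a) = ⊥ := by
      rw [elog, if_pos hx]
      exact EReal.coe_mul_bot_of_pos (lt_of_le_of_ne (hc0 s s') (Ne.symm hcs))
    have h2 : (∑ s'', ((N s s'' * Real.exp (α * (V s'' - V s)) : ℝ) : EReal) *
        elog (∑ a, M s a s'' * π s a)) = ⊥ :=
      ereal_sum_eq_bot _ _ (Finset.mem_univ s') h1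
    have h3 : (d s : EReal) * (∑ s'', ((N s s'' * Real.exp (α * (V s'' - V s)) : ℝ) : EReal) *
        elog (∑ a, M s a s'' * π s a)) = ⊥ := by
      rw [h2]
      exact EReal.coe_mul_bot_of_pos (lt_of_le_of_ne (hd0 s) (Ne.symm hds))
    have h4 : Rbar1Sto d N V α M π = ⊥ :=
      ereal_sum_eq_bot _ _ (Finset.mem_univ s) h3
    simp [h4]
  have hε0 : ∀ s, 0 ≤ ε s := fun s => by
    rw [hε]; exact Finset.sum_nonneg fun a _ => hπ0 s a
  have hnpos : ∀ s, 0 < (n s : ℝ) := by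
    intro s
    rw [hn]
    have h1 : (1:ℝ) ≠ 0 := one_ne_zero
    have : ∑ a, β s a ≠ 0 := by rw [hβ1 s]; exact h1
    obtain ⟨a, _, ha⟩ := Finset.exists_ne_zero_of_sum_ne_zero this
    have : a ∈ Finset.univ.filter (fun a => 0 < β s a) :=
      Finset.mem_filter.mpr ⟨Finset.mem_univ a, lt_of_le_of_ne (hβ0 s a) (Ne.symm ha)⟩
    exact_mod_cast Finset.card_pos.mpr ⟨a, this⟩
  -- decomposition of the πin inner sums
  have hsplit : ∀ s s', (∑ a, M s a s' * πin s a)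
      = (∑ a, M s a s' * π s a)
        + (ε s / n s) * ∑ a ∈ Finset.univ.filter (fun a => 0 < β s a), M s a s' := by
    intro s s'
    have hterm : ∀ a, M s a s' * πin s a
        = M s a s' * π s a + (if 0 < β s a then M s a s' * (ε s / n s) else 0) := by
      intro a
      rw [hπin]
      by_cases hb : 0 < β s a
      · simp only [hb, if_true]; ring
      · have hb0 : β s a = 0 := le_antisymm (not_lt.1 hb) (hβ0 s a)
        simp [hb, hMzero s a hb0 s']
    calc (∑ a, M s a s' * πin s a)
        = ∑ a, (M s a s' * π s a + (if 0 < β s a then M s a s' * (ε s / n s) else 0)) :=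
          Finset.sum_congr rfl fun a _ => hterm a
      _ = (∑ a, M s a s' * π s a) + ∑ a, (if 0 < β s a then M s a s' * (ε s / n s) else 0) :=
          Finset.sum_add_distrib
      _ = (∑ a, M s a s' * π s a)
            + (ε s / n s) * ∑ a ∈ Finset.univ.filter (fun a => 0 < β s a), M s a s' := by
          rw [← Finset.sum_filter, ← Finset.sum_mul, mul_comm]
  have hle : ∀ s s', (∑ a, M s a s' * π s a) ≤ ∑ a, M s a s' * πin s a := by
    intro s s'
    rw [hsplit]
    refine le_add_of_nonneg_right (mul_nonneg (div_nonneg (hε0 s) (hnpos s).le)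
      (Finset.sum_nonneg fun a _ => hM0 s a s'))
  have Hπin : ∀ s s', d s ≠ 0 → N s s' * Real.exp (α * (V s' - V s)) ≠ 0 →
      (∑ a, M s a s' * πin s a) ≠ 0 := by
    intro s s' hds hcs
    have hx : 0 < ∑ a, M s a s' * π s a :=
      lt_of_le_of_ne (hx0 s s') (Ne.symm (Hπ s s' hds hcs))
    exact ne_of_gt (lt_of_lt_of_le hx (hle s s'))
  -- the witnesses for strictness
  have hεpos : 0 < ε s₁ := by
    rw [hε]
    refine lt_of_lt_of_le hπatil (Finset.single_le_sum (fun a _ => hπ0 s₁ a)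
      (Finset.mem_filter.mpr ⟨Finset.mem_univ atil, hβatil⟩))
  obtain ⟨a₀, _, ha₀⟩ : ∃ a ∈ Finset.univ, β s₁ a ≠ 0 := by
    refine Finset.exists_ne_zero_of_sum_ne_zero ?_
    rw [hβ1 s₁]; exact one_ne_zero
  have ha₀pos : 0 < β s₁ a₀ := lt_of_le_of_ne (hβ0 s₁ a₀) (Ne.symm ha₀)
  obtain ⟨s₂, _, hs₂⟩ : ∃ s' ∈ Finset.univ, M s₁ a₀ s' ≠ 0 := by
    refine Finset.exists_ne_zero_of_sum_ne_zero ?_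
    rw [hMpmf s₁ a₀ ha₀pos]; exact one_ne_zero
  have hMs₂ : 0 < M s₁ a₀ s₂ := lt_of_le_of_ne (hM0 s₁ a₀ s₂) (Ne.symm hs₂)
  have hc₁₂ : 0 < N s₁ s₂ * Real.exp (α * (V s₂ - V s₁)) := by
    refine mul_pos ?_ (Real.exp_pos _)
    rw [hN]
    refine lt_of_lt_of_le (mul_pos ha₀pos hMs₂) ?_
    exact Finset.single_le_sum (fun a _ => mul_nonneg (hβ0 s₁ a) (hM0 s₁ a s₂))
      (Finset.mem_univ a₀)
  have hstrict : (∑ a, M s₁ a s₂ * π s₁ a) < ∑ a, M s₁ a s₂ * πin s₁ a := by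
    rw [hsplit]
    refine lt_add_of_pos_right _ (mul_pos (div_pos hεpos (hnpos s₁)) ?_)
    refine lt_of_lt_of_le hMs₂ (Finset.single_le_sum (fun a _ => hM0 s₁ a s₂)
      (Finset.mem_filter.mpr ⟨Finset.mem_univ a₀, ha₀pos⟩))
  -- reduce to real-valued comparison
  rw [Rbar1Sto_eq_coe d N V α M π Hπ, Rbar1Sto_eq_coe d N V α M πin Hπin,
    EReal.coe_lt_coe_iff]
  -- inner sums comparison for states in the support of d
  have hinner : ∀ s, d s ≠ 0 →
      (∑ s', (N s s' * Real.exp (α * (V s' - V s))) * Real.log (∑ a, M s a s' * π s a))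
        ≤ ∑ s', (N s s' * Real.exp (α * (V s' - V s))) * Real.log (∑ a, M s a s' * πin s a) := by
    intro s hds
    refine Finset.sum_le_sum fun s' _ => ?_
    by_cases hc : N s s' * Real.exp (α * (V s' - V s)) = 0
    · rw [hc, zero_mul, zero_mul]
    · refine mul_le_mul_of_nonneg_left ?_ (hc0 s s')
      have hx : 0 < ∑ a, M s a s' * π s a :=
        lt_of_le_of_ne (hx0 s s') (Ne.symm (Hπ s s' hds hc))
      exact Real.log_le_log hx (hle s s')
  refine Finset.sum_lt_sum (fun s _ => ?_) ⟨s₁, Finset.mem_univ s₁, ?_⟩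
  · by_cases hds : d s = 0
    · rw [hds, zero_mul, zero_mul]
    · exact mul_le_mul_of_nonneg_left (hinner s hds) (hd0 s)
  · refine mul_lt_mul_of_pos_left ?_ hs₁
    refine Finset.sum_lt_sum (fun s' _ => ?_) ⟨s₂, Finset.mem_univ s₂, ?_⟩
    · by_cases hc : N s₁ s' * Real.exp (α * (V s' - V s₁)) = 0
      · rw [hc, zero_mul, zero_mul]
      · refine mul_le_mul_of_nonneg_left ?_ (hc0 s₁ s')
        have hx : 0 < ∑ a, M s₁ a s' * π s₁ a :=
          lt_of_le_of_ne (hx0 s₁ s') (Ne.symm (Hπ s₁ s' (ne_of_gt hs₁) hc))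
        exact Real.log_le_log hx (hle s₁ s')
    · refine mul_lt_mul_of_pos_left ?_ hc₁₂
      have hx : 0 < ∑ a, M s₁ a s₂ * π s₁ a :=
        lt_of_le_of_ne (hx0 s₁ s₂) (Ne.symm (Hπ s₁ s₂ (ne_of_gt hs₁) (ne_of_gt hc₁₂)))
      exact Real.log_lt_log hx hstrict
end
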